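/- arXiv:2601.14869 — 7 statements merged into one kernel-verified Lean document; each statement's English description precedes it below -/
import Mathlib

section
/- Let n ≥ 1, let J : ℝ → Matrix (Fin n) (Fin n) ℝ be continuous, and let x : ℝ → EuclideanSpace ℝ (Fin n) satisfy x'(s) = J(s) *ᵥ x(s) for all s in an interval [t₀, t₁]. Then for every t ∈ [t₀, t₁], ‖x(t)‖ ≤ ‖x(t₀)‖ · exp(∫_{t₀}^{t} λmax(H(s)) ds), where H(s) = (J(s) + J(s)ᵀ)/2 is the symmetric part of J(s) and λmax(H(s)) denotes the largest eigenvalue of the real symmetric matrix H(s). -/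
open Matrix

/-- The symmetric part `H = (J + Jᵀ)/2` of a real square matrix. -/
noncomputable def symPart {n : ℕ} (A : Matrix (Fin n) (Fin n) ℝ) : Matrix (Fin n) (Fin n) ℝ :=
  (1 / 2 : ℝ) • (A + Aᵀ)

theorem symPart_isHermitian {n : ℕ} (A : Matrix (Fin n) (Fin n) ℝ) :
    (symPart A).IsHermitian := by
  show (symPart A)ᴴ = symPart A
  ext i j
  simp [symPart, Matrix.conjTranspose_apply, Matrix.transpose_apply, Matrix.add_apply,
    Matrix.smul_apply, smul_eq_mul]
  ring

/-- The largest eigenvalue of a real symmetric (Hermitian) matrix. -/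
noncomputable def lamMax {n : ℕ} {A : Matrix (Fin n) (Fin n) ℝ} (hA : A.IsHermitian) : ℝ :=
  ⨆ i, hA.eigenvalues i

open scoped RealInnerProductSpace
open Matrix
open scoped RealInnerProductSpace
variable {n : ℕ}

noncomputable def mvE (A : Matrix (Fin n) (Fin n) ℝ) (u : EuclideanSpace ℝ (Fin n)) :
    EuclideanSpace ℝ (Fin n) := (WithLp.equiv 2 (Fin n → ℝ)).symm (A *ᵥ (WithLp.equiv 2 (Fin n → ℝ) u))

theorem inner_mvE_symm (A : Matrix (Fin n) (Fin n) ℝ) (hA : A.IsHermitian) (u w : EuclideanSpace ℝ (Fin n)) :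
    ⟪mvE A u, w⟫ = ⟪u, mvE A w⟫ := by
  have hAt : Aᵀ = A := hA
  simp only [mvE, PiLp.inner_apply, RCLike.inner_apply, starRingEnd_apply, star_trivial,
    WithLp.equiv_symm_apply, WithLp.equiv_apply, WithLp.ofLp_toLp, mulVec, dotProduct,
    Finset.mul_sum, Finset.sum_mul]
  rw [Finset.sum_comm]
  refine Finset.sum_congr rfl fun i _ => Finset.sum_congr rfl fun j _ => ?_
  have h := congrFun (congrFun hAt i) j
  rw [Matrix.transpose_apply] at h
  rw [← h]; ring

theorem mvE_eigen (A : Matrix (Fin n) (Fin n) ℝ) (hA : A.IsHermitian) (i : Fin n) :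
    mvE A (hA.eigenvectorBasis i) = hA.eigenvalues i • hA.eigenvectorBasis i := by
  have h := hA.mulVec_eigenvectorBasis i
  ext j
  have := congrFun h j
  simpa [mvE] using this

theorem rayleigh_le [Nonempty (Fin n)] {A : Matrix (Fin n) (Fin n) ℝ} (hA : A.IsHermitian)
    (v : EuclideanSpace ℝ (Fin n)) : ⟪v, mvE A v⟫ ≤ lamMax hA * ‖v‖ ^ 2 := by
  set b := hA.eigenvectorBasis
  have key : ⟪v, mvE A v⟫ = ∑ i, hA.eigenvalues i * (⟪v, b i⟫ * ⟪v, b i⟫) := by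
    rw [← b.sum_inner_mul_inner v (mvE A v)]
    refine Finset.sum_congr rfl fun i _ => ?_
    rw [← inner_mvE_symm A hA (b i) v, mvE_eigen A hA i,
      real_inner_smul_left, real_inner_comm (b i) v]
    ring
  have key2 : ∑ i, ⟪v, b i⟫ * ⟪v, b i⟫ = ‖v‖ ^ 2 := by
    have := b.sum_inner_mul_inner v v
    rw [real_inner_self_eq_norm_sq] at this
    rw [← this]
    exact Finset.sum_congr rfl fun i _ => by rw [real_inner_comm (b i) v]
  rw [key, ← key2, Finset.mul_sum]
  refine Finset.sum_le_sum fun i _ => ?_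
  have hle : hA.eigenvalues i ≤ lamMax hA :=
    le_ciSup (Set.Finite.bddAbove (Set.finite_range _)) i
  exact mul_le_mul_of_nonneg_right hle (mul_self_nonneg _)

theorem exists_lamMax [Nonempty (Fin n)] {A : Matrix (Fin n) (Fin n) ℝ} (hA : A.IsHermitian) :
    ∃ v : EuclideanSpace ℝ (Fin n), ‖v‖ = 1 ∧ ⟪v, mvE A v⟫ = lamMax hA := by
  obtain ⟨i, hi⟩ := exists_eq_ciSup_of_finite (f := hA.eigenvalues)
  refine ⟨hA.eigenvectorBasis i, hA.eigenvectorBasis.orthonormal.1 i, ?_⟩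
  rw [mvE_eigen A hA i, real_inner_smul_right, real_inner_self_eq_norm_sq,
    hA.eigenvectorBasis.orthonormal.1 i]
  simpa [lamMax] using hi

theorem abs_coord_le_norm (v : EuclideanSpace ℝ (Fin n)) (i : Fin n) : |v i| ≤ ‖v‖ := by
  rw [EuclideanSpace.norm_eq, ← Real.sqrt_sq_eq_abs]
  apply Real.sqrt_le_sqrt
  have : v i ^ 2 ≤ ∑ j, ‖v j‖ ^ 2 := by
    have := Finset.single_le_sum (f := fun j => ‖v j‖ ^ 2)
      (fun j _ => sq_nonneg _) (Finset.mem_univ i)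
    simpa [sq_abs] using this
  simpa using this

theorem quad_form_abs_le (M : Matrix (Fin n) (Fin n) ℝ) (v : EuclideanSpace ℝ (Fin n))
    (hv : ‖v‖ = 1) : |⟪v, mvE M v⟫| ≤ ∑ i, ∑ j, |M i j| := by
  have hv1 : ∀ i, |v i| ≤ 1 := fun i => hv ▸ abs_coord_le_norm v i
  have : ⟪v, mvE M v⟫ = ∑ i, ∑ j, v i * (M i j * v j) := by
    simp [mvE, PiLp.inner_apply, mulVec, dotProduct, Finset.mul_sum, Finset.sum_mul, mul_comm, mul_left_comm]
  rw [this]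
  refine (Finset.abs_sum_le_sum_abs _ _).trans (Finset.sum_le_sum fun i _ => ?_)
  refine (Finset.abs_sum_le_sum_abs _ _).trans (Finset.sum_le_sum fun j _ => ?_)
  rw [abs_mul, abs_mul]
  calc |v i| * (|M i j| * |v j|) ≤ 1 * (|M i j| * 1) := by
        apply mul_le_mul (hv1 i) (mul_le_mul_of_nonneg_left (hv1 j) (abs_nonneg _))
          (by positivity) zero_le_one
    _ = |M i j| := by ring

theorem lamMax_sub_le [Nonempty (Fin n)] {A B : Matrix (Fin n) (Fin n) ℝ}
    (hA : A.IsHermitian) (hB : B.IsHermitian) :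
    lamMax hA - lamMax hB ≤ ∑ i, ∑ j, |A i j - B i j| := by
  obtain ⟨v, hv1, hv2⟩ := exists_lamMax hA
  have h1 : ⟪v, mvE B v⟫ ≤ lamMax hB := by
    have := rayleigh_le hB v
    rwa [hv1, one_pow, mul_one] at this
  have h2 : mvE A v = mvE B v + mvE (A - B) v := by
    ext j; simp [mvE, sub_mulVec, mulVec]
  have h3 : ⟪v, mvE A v⟫ = ⟪v, mvE B v⟫ + ⟪v, mvE (A - B) v⟫ := by
    rw [h2, inner_add_right]
  have h4 : |⟪v, mvE (A - B) v⟫| ≤ ∑ i, ∑ j, |A i j - B i j| := by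
    simpa [Matrix.sub_apply] using quad_form_abs_le (A - B) v hv1
  have := le_abs_self ⟪v, mvE (A - B) v⟫
  linarith [hv2.symm.le, hv2.ge]

theorem lamMax_continuous [Nonempty (Fin n)] (J : ℝ → Matrix (Fin n) (Fin n) ℝ)
    (hJ : Continuous J) :
    Continuous fun s => lamMax (symPart_isHermitian (J s)) := by
  rw [continuous_iff_continuousAt]
  intro s₀
  set H : ℝ → Matrix (Fin n) (Fin n) ℝ := fun s => symPart (J s) with hH
  set lam : ℝ → ℝ := fun s => lamMax (symPart_isHermitian (J s)) with hlam
  set D : ℝ → ℝ := fun s => ∑ i, ∑ j, |H s i j - H s₀ i j| with hD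
  have hbound : ∀ s, ‖lam s - lam s₀‖ ≤ D s := by
    intro s
    rw [Real.norm_eq_abs, abs_sub_le_iff]
    constructor
    · exact lamMax_sub_le (symPart_isHermitian (J s)) (symPart_isHermitian (J s₀))
    · have h := lamMax_sub_le (symPart_isHermitian (J s₀)) (symPart_isHermitian (J s))
      have heq : ∀ i j, |H s₀ i j - H s i j| = |H s i j - H s₀ i j| := fun i j => abs_sub_comm _ _
      calc lam s₀ - lam s ≤ ∑ i, ∑ j, |H s₀ i j - H s i j| := h
        _ = D s := by simp only [hD]; exact Finset.sum_congr rfl fun i _ =>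
              Finset.sum_congr rfl fun j _ => heq i j
  have hDcont : Continuous D := by
    apply continuous_finset_sum
    intro i _
    apply continuous_finset_sum
    intro j _
    have hij : Continuous fun s => H s i j := by
      have h1 : Continuous fun s => J s i j :=
        (continuous_apply j).comp ((continuous_apply i).comp hJ)
      have h2 : Continuous fun s => J s j i :=
        (continuous_apply i).comp ((continuous_apply j).comp hJ)
      have : (fun s => H s i j) = fun s => (1/2 : ℝ) * (J s i j + J s j i) := by
        funext s
        simp [hH, symPart, Matrix.smul_apply, Matrix.add_apply, Matrix.transpose_apply]
        ring
      rw [this]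
      exact continuous_const.mul (h1.add h2)
    exact (hij.sub continuous_const).abs
  have hD0 : Filter.Tendsto D (nhds s₀) (nhds 0) := by
    have : D s₀ = 0 := by simp [hD]
    have h := hDcont.continuousAt (x := s₀)
    rwa [ContinuousAt, this] at h
  have := squeeze_zero_norm hbound hD0
  have h2 : Filter.Tendsto lam (nhds s₀) (nhds (0 + lam s₀)) := by
    simpa using this.add (tendsto_const_nhds (x := lam s₀))
  simpa [ContinuousAt] using h2

theorem inner_mvE_left_le [Nonempty (Fin n)] (A : Matrix (Fin n) (Fin n) ℝ)
    (v : EuclideanSpace ℝ (Fin n)) :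
    ⟪mvE A v, v⟫ ≤ lamMax (symPart_isHermitian A) * ‖v‖ ^ 2 := by
  have heq : ⟪mvE A v, v⟫ = ⟪v, mvE (symPart A) v⟫ := by
    simp only [mvE, symPart, PiLp.inner_apply, RCLike.inner_apply, starRingEnd_apply, star_trivial,
      WithLp.equiv_symm_apply, WithLp.equiv_apply, WithLp.ofLp_toLp, mulVec, dotProduct,
      Matrix.smul_apply, Matrix.add_apply, Matrix.transpose_apply,
      Finset.mul_sum, Finset.sum_mul]
    rw [Finset.sum_comm]
    rw [show ∀ f : Fin n → Fin n → ℝ, (∑ j, ∑ i, f j i) = ∑ j, ∑ i, f j i from fun _ => rfl]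
    have : ∀ j i, v j * ((1/2 : ℝ) • (A j i + A i j) * v i)
        = (1/2) * (A j i * v i * v j) + (1/2) * (A i j * v i * v j) := by
      intro j i; simp [smul_eq_mul]; ring
    symm
    calc _ = ∑ i, ∑ k, ((1/2 : ℝ) * (v i * (A i k * v k)) + (1/2) * (v k * (A k i * v i))) :=
          Finset.sum_congr rfl fun i _ => Finset.sum_congr rfl fun k _ => by simp [smul_eq_mul]; ring
      _ = _ := by
          have hs : ∑ j, ∑ i, v i * (A i j * v j) = ∑ i, ∑ k, v i * (A i k * v k) := Finset.sum_comm
          simp only [Finset.sum_add_distrib, ← Finset.mul_sum]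
          rw [hs, show ∑ i, v i * ∑ k, A i k * v k = ∑ i, ∑ k, v i * (A i k * v k) by
            simp only [Finset.mul_sum]]
          ring
  rw [heq]
  exact rayleigh_le (symPart_isHermitian A) v

theorem stmt_1 {n : ℕ} (hn : 1 ≤ n) (J : ℝ → Matrix (Fin n) (Fin n) ℝ)
    (hJ : Continuous J)
    (x : ℝ → EuclideanSpace ℝ (Fin n)) (t₀ t₁ : ℝ)
    (hx : ∀ s ∈ Set.Icc t₀ t₁, HasDerivAt x (WithLp.toLp 2 (J s *ᵥ x s)) s)
    (t : ℝ) (ht : t ∈ Set.Icc t₀ t₁) :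
    ‖x t‖ ≤ ‖x t₀‖ * Real.exp (∫ s in t₀..t, lamMax (symPart_isHermitian (J s))) := by
  haveI : Nonempty (Fin n) := Fin.pos_iff_nonempty.mp hn
  set lam : ℝ → ℝ := fun s => lamMax (symPart_isHermitian (J s)) with hlam
  have hlamc : Continuous lam := lamMax_continuous J hJ
  set I : ℝ → ℝ := fun s => ∫ u in t₀..s, lam u with hIdef
  have hI : ∀ s, HasDerivAt I (lam s) s := fun s =>
    (hlamc.integral_hasStrictDerivAt t₀ s).hasDerivAt
  set g : ℝ → ℝ := fun s => ⟪x s, x s⟫ with hg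
  set φ : ℝ → ℝ := fun s => g s * Real.exp (-(2 * I s)) with hφ
  have hφd : ∀ s ∈ Set.Icc t₀ t₁, HasDerivAt φ
      ((⟪x s, (mvE (J s) (x s))⟫ + ⟪(mvE (J s) (x s)), x s⟫) * Real.exp (-(2 * I s))
        + g s * (Real.exp (-(2 * I s)) * (-(2 * lam s)))) s := by
    intro s hs
    have hxd : HasDerivAt x (mvE (J s) (x s)) s := hx s hs
    have hgd : HasDerivAt g (⟪x s, (mvE (J s) (x s))⟫ + ⟪(mvE (J s) (x s)), x s⟫) s :=
      hxd.inner ℝ hxd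
    have hed : HasDerivAt (fun s => Real.exp (-(2 * I s)))
        (Real.exp (-(2 * I s)) * (-(2 * lam s))) s := (((hI s).const_mul 2).neg).exp
    exact hgd.mul hed
  have hderiv_nonpos : ∀ s ∈ Set.Icc t₀ t₁,
      (⟪x s, (mvE (J s) (x s))⟫ + ⟪(mvE (J s) (x s)), x s⟫) * Real.exp (-(2 * I s))
        + g s * (Real.exp (-(2 * I s)) * (-(2 * lam s))) ≤ 0 := by
    intro s _
    have h1 : ⟪(mvE (J s) (x s)), x s⟫ ≤ lam s * ‖x s‖ ^ 2 := inner_mvE_left_le (J s) (x s)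
    have h2 : ⟪x s, (mvE (J s) (x s))⟫ = ⟪(mvE (J s) (x s)), x s⟫ := real_inner_comm _ _
    have h3 : g s = ‖x s‖ ^ 2 := real_inner_self_eq_norm_sq _
    have h4 : (0:ℝ) < Real.exp (-(2 * I s)) := Real.exp_pos _
    rw [h2, h3]
    nlinarith [sq_nonneg ‖x s‖]
  have hcont : ContinuousOn φ (Set.Icc t₀ t₁) := fun s hs =>
    ((hφd s hs).continuousAt).continuousWithinAt
  have hanti : AntitoneOn φ (Set.Icc t₀ t₁) := by
    apply antitoneOn_of_deriv_nonpos (convex_Icc t₀ t₁) hcont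
    · intro s hs
      rw [interior_Icc] at hs
      exact (hφd s (Set.mem_Icc_of_Ioo hs)).differentiableAt.differentiableWithinAt
    · intro s hs
      rw [interior_Icc] at hs
      rw [(hφd s (Set.mem_Icc_of_Ioo hs)).deriv]
      exact hderiv_nonpos s (Set.mem_Icc_of_Ioo hs)
  have ht₀ : t₀ ∈ Set.Icc t₀ t₁ := ⟨le_refl _, le_trans ht.1 ht.2⟩
  have hφle : φ t ≤ φ t₀ := hanti ht₀ ht ht.1
  have hIt₀ : I t₀ = 0 := intervalIntegral.integral_same
  have hgle : g t ≤ g t₀ * Real.exp (2 * I t) := by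
    have h4 : (0:ℝ) < Real.exp (-(2 * I t)) := Real.exp_pos _
    have : φ t₀ = g t₀ := by simp [hφ, hIt₀]
    rw [this] at hφle
    have := mul_le_mul_of_nonneg_right hφle (le_of_lt (Real.exp_pos (2 * I t)))
    rwa [hφ, mul_assoc, ← Real.exp_add, neg_add_cancel, Real.exp_zero, mul_one] at this
  have hsq : ‖x t‖ ^ 2 ≤ (‖x t₀‖ * Real.exp (I t)) ^ 2 := by
    have h3 : g t = ‖x t‖ ^ 2 := real_inner_self_eq_norm_sq _
    have h3' : g t₀ = ‖x t₀‖ ^ 2 := real_inner_self_eq_norm_sq _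
    rw [h3, h3'] at hgle
    calc ‖x t‖ ^ 2 ≤ ‖x t₀‖ ^ 2 * Real.exp (2 * I t) := hgle
      _ = (‖x t₀‖ * Real.exp (I t)) ^ 2 := by
          rw [mul_pow, sq (Real.exp (I t)), ← Real.exp_add, two_mul]
  have h := Real.sqrt_le_sqrt hsq
  rwa [Real.sqrt_sq (norm_nonneg _), Real.sqrt_sq (by positivity)] at h
end

section
/- Let n ≥ 1, let J : ℝ → Matrix (Fin n) (Fin n) ℝ be continuous, and let x : ℝ → EuclideanSpace ℝ (Fin n) satisfy x'(s) = J(s) *ᵥ x(s) for all s in an interval [t₀, t₁]. Then for every t ∈ [t₀, t₁], ‖x(t)‖ ≥ ‖x(t₀)‖ · exp(∫_{t₀}^{t} λmin(H(s)) ds), where H(s) = (J(s) + J(s)ᵀ)/2 is the symmetric part of J(s) and λmin(H(s)) denotes the smallest eigenvalue of the real symmetric matrix H(s). -/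
open Matrix
open scoped RealInnerProductSpace

/-- The smallest eigenvalue of a real symmetric (Hermitian) matrix. -/
noncomputable def lamMin {n : ℕ} {A : Matrix (Fin n) (Fin n) ℝ} (hA : A.IsHermitian) : ℝ :=
  ⨅ i, hA.eigenvalues i

-- eigenvectors as EuclideanSpace elements
theorem toEuclideanLin_eigenvectorBasis {n : ℕ} {A : Matrix (Fin n) (Fin n) ℝ}
    (hA : A.IsHermitian) (i : Fin n) :
    Matrix.toEuclideanLin A (hA.eigenvectorBasis i) =
      hA.eigenvalues i • hA.eigenvectorBasis i := by
  ext j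
  exact congrFun (hA.mulVec_eigenvectorBasis i) j

theorem rayleigh_key {n : ℕ} {A : Matrix (Fin n) (Fin n) ℝ} (hA : A.IsHermitian)
    (v : EuclideanSpace ℝ (Fin n)) :
    ⟪v, Matrix.toEuclideanLin A v⟫ =
      ∑ i, hA.eigenvalues i * ⟪hA.eigenvectorBasis i, v⟫ ^ 2 := by
  have hsym : (Matrix.toEuclideanLin A).IsSymmetric :=
    Matrix.isHermitian_iff_isSymmetric.1 hA
  rw [← (hA.eigenvectorBasis).sum_inner_mul_inner v (Matrix.toEuclideanLin A v)]
  refine Finset.sum_congr rfl fun i _ => ?_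
  rw [← hsym (hA.eigenvectorBasis i) v, toEuclideanLin_eigenvectorBasis hA i,
    real_inner_smul_left, real_inner_comm v]
  ring

theorem norm_sq_eq_sum_inner {n : ℕ} {A : Matrix (Fin n) (Fin n) ℝ} (hA : A.IsHermitian)
    (v : EuclideanSpace ℝ (Fin n)) :
    ‖v‖ ^ 2 = ∑ i, ⟪hA.eigenvectorBasis i, v⟫ ^ 2 := by
  rw [← real_inner_self_eq_norm_sq, ← (hA.eigenvectorBasis).sum_inner_mul_inner v v]
  refine Finset.sum_congr rfl fun i _ => ?_
  rw [real_inner_comm, sq]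

theorem lamMin_le_eigenvalue {n : ℕ} {A : Matrix (Fin n) (Fin n) ℝ} (hA : A.IsHermitian)
    (i : Fin n) : lamMin hA ≤ hA.eigenvalues i :=
  ciInf_le (Set.Finite.bddBelow (Set.finite_range _)) i

theorem rayleigh_lower {n : ℕ} {A : Matrix (Fin n) (Fin n) ℝ} (hA : A.IsHermitian)
    (v : EuclideanSpace ℝ (Fin n)) :
    lamMin hA * ‖v‖ ^ 2 ≤ ⟪v, Matrix.toEuclideanLin A v⟫ := by
  rw [rayleigh_key hA v, norm_sq_eq_sum_inner hA v, Finset.mul_sum]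
  exact Finset.sum_le_sum fun i _ =>
    mul_le_mul_of_nonneg_right (lamMin_le_eigenvalue hA i) (sq_nonneg _)

theorem lamMin_attained {n : ℕ} (hn : 1 ≤ n) {A : Matrix (Fin n) (Fin n) ℝ}
    (hA : A.IsHermitian) : ∃ i, lamMin hA = hA.eigenvalues i := by
  haveI : Nonempty (Fin n) := Fin.pos_iff_nonempty.1 hn
  obtain ⟨k, hk⟩ := Finite.exists_min hA.eigenvalues
  exact ⟨k, le_antisymm (lamMin_le_eigenvalue hA k) (le_ciInf hk)⟩

/-- the matrix as a continuous linear map on Euclidean space -/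
noncomputable def matCLM {n : ℕ} (A : Matrix (Fin n) (Fin n) ℝ) :
    EuclideanSpace ℝ (Fin n) →L[ℝ] EuclideanSpace ℝ (Fin n) :=
  LinearMap.toContinuousLinearMap (Matrix.toEuclideanLin A)

theorem lamMin_le_add {n : ℕ} (hn : 1 ≤ n) {A B : Matrix (Fin n) (Fin n) ℝ}
    (hA : A.IsHermitian) (hB : B.IsHermitian) :
    lamMin hA ≤ lamMin hB + ‖matCLM (A - B)‖ := by
  obtain ⟨k, hk⟩ := lamMin_attained hn hB
  set v := hB.eigenvectorBasis k with hv
  have hvn : ‖v‖ = 1 := hB.eigenvectorBasis.orthonormal.1 k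
  have h1 : lamMin hA ≤ ⟪v, Matrix.toEuclideanLin A v⟫ := by
    have := rayleigh_lower hA v
    rwa [hvn, one_pow, mul_one] at this
  have h2 : ⟪v, Matrix.toEuclideanLin B v⟫ = lamMin hB := by
    rw [toEuclideanLin_eigenvectorBasis hB k, real_inner_smul_right, real_inner_self_eq_norm_sq,
      hvn, one_pow, mul_one, hk]
  have h3 : ⟪v, Matrix.toEuclideanLin (A - B) v⟫ ≤ ‖matCLM (A - B)‖ := by
    calc ⟪v, Matrix.toEuclideanLin (A - B) v⟫ ≤ ‖v‖ * ‖Matrix.toEuclideanLin (A - B) v‖ :=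
          real_inner_le_norm _ _
      _ = ‖matCLM (A - B) v‖ := by rw [hvn, one_mul]; rfl
      _ ≤ ‖matCLM (A - B)‖ * ‖v‖ := (matCLM (A - B)).le_opNorm v
      _ = ‖matCLM (A - B)‖ := by rw [hvn, mul_one]
  have h4 : ⟪v, Matrix.toEuclideanLin A v⟫ =
      ⟪v, Matrix.toEuclideanLin B v⟫ + ⟪v, Matrix.toEuclideanLin (A - B) v⟫ := by
    rw [map_sub]
    simp [inner_sub_right]
  linarith

theorem abs_lamMin_sub_le {n : ℕ} (hn : 1 ≤ n) {A B : Matrix (Fin n) (Fin n) ℝ}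
    (hA : A.IsHermitian) (hB : B.IsHermitian) :
    |lamMin hA - lamMin hB| ≤ ‖matCLM (A - B)‖ := by
  rw [abs_sub_le_iff]
  constructor
  · linarith [lamMin_le_add hn hA hB]
  · have := lamMin_le_add hn hB hA
    have hnorm : ‖matCLM (B - A)‖ = ‖matCLM (A - B)‖ := by
      have : matCLM (B - A) = -(matCLM (A - B)) := by
        unfold matCLM
        ext w
        simp [map_sub]
      rw [this, norm_neg]
    linarith

noncomputable def matCLMLin (n : ℕ) :
    Matrix (Fin n) (Fin n) ℝ →ₗ[ℝ] (EuclideanSpace ℝ (Fin n) →L[ℝ] EuclideanSpace ℝ (Fin n)) where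
  toFun := matCLM
  map_add' A B := by ext v; simp [matCLM]
  map_smul' c A := by ext v; simp [matCLM]

theorem continuous_matCLM (n : ℕ) : Continuous (matCLM (n := n)) :=
  (matCLMLin n).continuous_of_finiteDimensional

theorem continuous_symPart (n : ℕ) : Continuous (symPart (n := n)) := by
  unfold symPart
  exact ((continuous_id.add continuous_id.matrix_transpose :
    Continuous fun A : Matrix (Fin n) (Fin n) ℝ => A + Aᵀ)).const_smul (1 / 2 : ℝ)

theorem inner_toEuclideanLin_transpose {n : ℕ} (A : Matrix (Fin n) (Fin n) ℝ)
    (v : EuclideanSpace ℝ (Fin n)) :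
    ⟪v, Matrix.toEuclideanLin Aᵀ v⟫ = ⟪v, Matrix.toEuclideanLin A v⟫ := by
  simp only [Matrix.toEuclideanLin_apply, PiLp.inner_apply, RCLike.inner_apply, conj_trivial,
    Matrix.mulVec, dotProduct, Matrix.transpose_apply, Finset.mul_sum, Finset.sum_mul]
  rw [Finset.sum_comm]
  exact Finset.sum_congr rfl fun i _ => Finset.sum_congr rfl fun j _ => by ring

theorem inner_symPart {n : ℕ} (A : Matrix (Fin n) (Fin n) ℝ) (v : EuclideanSpace ℝ (Fin n)) :
    ⟪v, Matrix.toEuclideanLin (symPart A) v⟫ = ⟪v, Matrix.toEuclideanLin A v⟫ := by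
  have h := inner_toEuclideanLin_transpose A v
  unfold symPart
  rw [_root_.map_smul, map_add]
  simp only [LinearMap.smul_apply, LinearMap.add_apply, inner_smul_right, inner_add_right]
  rw [h]
  ring

theorem stmt_2 {n : ℕ} (hn : 1 ≤ n) (J : ℝ → Matrix (Fin n) (Fin n) ℝ)
    (hJ : Continuous J)
    (x : ℝ → EuclideanSpace ℝ (Fin n)) (t₀ t₁ : ℝ)
    (hx : ∀ s ∈ Set.Icc t₀ t₁, HasDerivAt x (WithLp.toLp 2 (J s *ᵥ x s)) s)
    (t : ℝ) (ht : t ∈ Set.Icc t₀ t₁) :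
    ‖x t₀‖ * Real.exp (∫ s in t₀..t, lamMin (symPart_isHermitian (J s))) ≤ ‖x t‖ := by
  obtain ⟨ht₀, ht₁'⟩ := ht
  have ht01 : t₀ ≤ t₁ := le_trans ht₀ ht₁'
  set f : ℝ → ℝ := fun s => lamMin (symPart_isHermitian (J s)) with hfdef
  have hfc : Continuous f := by
    rw [Metric.continuous_iff]
    intro s ε hε
    have hC : Continuous fun u => matCLM (symPart (J u)) :=
      (continuous_matCLM n).comp ((continuous_symPart n).comp hJ)
    obtain ⟨δ, hδ, h⟩ := Metric.continuous_iff.1 hC s ε hε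
    refine ⟨δ, hδ, fun a ha => ?_⟩
    have h2 := h a ha
    rw [dist_eq_norm] at h2
    have h3 := abs_lamMin_sub_le hn (symPart_isHermitian (J a)) (symPart_isHermitian (J s))
    have h4 : matCLM (symPart (J a) - symPart (J s)) =
        matCLM (symPart (J a)) - matCLM (symPart (J s)) := map_sub (matCLMLin n) _ _
    rw [Real.dist_eq]
    calc |f a - f s| ≤ ‖matCLM (symPart (J a) - symPart (J s))‖ := h3
      _ = ‖matCLM (symPart (J a)) - matCLM (symPart (J s))‖ := by rw [h4]
      _ < ε := h2
  set F : ℝ → ℝ := fun s => ∫ u in t₀..s, f u with hFdef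
  have hFd : ∀ s : ℝ, HasDerivAt F (f s) s := fun s =>
    intervalIntegral.integral_hasDerivAt_right (hfc.intervalIntegrable _ _)
      (hfc.stronglyMeasurableAtFilter _ _) hfc.continuousAt
  set g : ℝ → ℝ := fun s => ⟪x s, x s⟫ with hgdef
  have hgd : ∀ s ∈ Set.Icc t₀ t₁,
      HasDerivAt g (2 * ⟪x s, WithLp.toLp 2 (J s *ᵥ x s)⟫) s := by
    intro s hs
    have h := (hx s hs).inner ℝ (hx s hs)
    refine h.congr_deriv ?_
    rw [real_inner_comm (x s)]
    ring
  set φ : ℝ → ℝ := fun s => g s * Real.exp (-2 * F s) with hφdef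
  have hφd : ∀ s ∈ Set.Icc t₀ t₁, HasDerivAt φ
      ((2 * ⟪x s, WithLp.toLp 2 (J s *ᵥ x s)⟫ - 2 * f s * g s)
        * Real.exp (-2 * F s)) s := by
    intro s hs
    have h1 := (hgd s hs).mul (((hFd s).const_mul (-2 : ℝ)).exp)
    refine h1.congr_deriv ?_
    ring
  have hkey : ∀ s ∈ Set.Icc t₀ t₁,
      0 ≤ 2 * ⟪x s, WithLp.toLp 2 (J s *ᵥ x s)⟫ - 2 * f s * g s := by
    intro s hs
    have hr := rayleigh_lower (symPart_isHermitian (J s)) (x s)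
    rw [inner_symPart] at hr
    have he : ⟪x s, Matrix.toEuclideanLin (J s) (x s)⟫ =
        ⟪x s, WithLp.toLp 2 (J s *ᵥ x s)⟫ := rfl
    have hg2 : g s = ‖x s‖ ^ 2 := real_inner_self_eq_norm_sq _
    rw [he] at hr
    rw [hg2]
    linarith
  have hmono : MonotoneOn φ (Set.Icc t₀ t₁) := by
    apply monotoneOn_of_deriv_nonneg (convex_Icc t₀ t₁)
    · exact fun s hs => ((hφd s hs).continuousAt).continuousWithinAt
    · intro s hs
      rw [interior_Icc] at hs
      exact ((hφd s (Set.mem_Icc_of_Ioo hs)).differentiableAt).differentiableWithinAt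
    · intro s hs
      rw [interior_Icc] at hs
      have hs' := Set.mem_Icc_of_Ioo hs
      rw [(hφd s hs').deriv]
      exact mul_nonneg (hkey s hs') (Real.exp_nonneg _)
  have h0 : φ t₀ ≤ φ t := hmono (Set.left_mem_Icc.2 ht01) ⟨ht₀, ht₁'⟩ ht₀
  have hF0 : F t₀ = 0 := intervalIntegral.integral_same
  have hφt₀ : φ t₀ = g t₀ := by
    rw [hφdef]
    simp [hF0]
  have hmain : g t₀ ≤ g t * Real.exp (-2 * F t) := by rw [← hφt₀]; exact h0
  have hg0 : g t₀ = ‖x t₀‖ ^ 2 := real_inner_self_eq_norm_sq _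
  have hgt : g t = ‖x t‖ ^ 2 := real_inner_self_eq_norm_sq _
  have hE : Real.exp (-2 * F t) * (Real.exp (F t) * Real.exp (F t)) = 1 := by
    rw [← Real.exp_add, ← Real.exp_add]
    ring_nf
    exact Real.exp_zero
  show ‖x t₀‖ * Real.exp (F t) ≤ ‖x t‖
  nlinarith [norm_nonneg (x t), norm_nonneg (x t₀), Real.exp_pos (F t),
    Real.exp_pos (-2 * F t), mul_nonneg (norm_nonneg (x t₀)) (Real.exp_pos (F t)).le,
    sq_nonneg (‖x t₀‖ * Real.exp (F t) - ‖x t‖), sq_nonneg (‖x t₀‖ * Real.exp (F t) + ‖x t‖)]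
end

section
/- Let n ≥ 1 and let J, B, Σ : ℝ → Matrix (Fin n) (Fin n) ℝ. Suppose at time t: Σ(t) is positive semidefinite and Σ is differentiable with Σ'(t) = J(t)Σ(t) + Σ(t)J(t)ᵀ + B(t). Then the derivative of s ↦ tr(Σ(s)) at t satisfies (d/dt) tr(Σ(t)) ≤ 2 · λmax(H(t)) · tr(Σ(t)) + tr(B(t)), where H(t) = (J(t) + J(t)ᵀ)/2 is the symmetric part of J(t) and λmax(H(t)) denotes the largest eigenvalue of the real symmetric matrix H(t). -/
open Matrix

attribute [local instance] Matrix.normedAddCommGroup Matrix.normedSpace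

lemma psd_trace_nonneg {n : ℕ} {M : Matrix (Fin n) (Fin n) ℝ} (hM : M.PosSemidef) :
    0 ≤ M.trace := by
  rw [Matrix.trace]
  refine Finset.sum_nonneg fun i _ => ?_
  have := hM.dotProduct_mulVec_nonneg (Pi.single i 1)
  simpa [dotProduct_single, Matrix.mulVec_single] using this

lemma psd_trace_mul_nonneg {n : ℕ} {P S : Matrix (Fin n) (Fin n) ℝ}
    (hP : P.PosSemidef) (hS : S.PosSemidef) : 0 ≤ (P * S).trace := by
  obtain ⟨C, rfl⟩ : ∃ C : Matrix (Fin n) (Fin n) ℝ, S = Cᴴ * C := by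
    classical
    open scoped MatrixOrder in
    obtain ⟨X, hX, -, rfl⟩ := CFC.exists_sqrt_of_isSelfAdjoint_of_quasispectrumRestricts
      hS.isHermitian (QuasispectrumRestricts.nnreal_of_nonneg hS.nonneg)
    exact ⟨X, by rw [← Matrix.star_eq_conjTranspose, hX.star_eq]⟩
  have h : (P * (Cᴴ * C)).trace = (C * P * Cᴴ).trace := by
    rw [← Matrix.mul_assoc, Matrix.trace_mul_comm, Matrix.mul_assoc]
  rw [h]
  exact psd_trace_nonneg (hP.mul_mul_conjTranspose_same C)

lemma eigenvalue_le_lamMax {n : ℕ} (hn : 1 ≤ n) {A : Matrix (Fin n) (Fin n) ℝ}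
    (hA : A.IsHermitian) (i : Fin n) : hA.eigenvalues i ≤ lamMax hA :=
  le_ciSup (Set.Finite.bddAbove (Set.finite_range _)) i

lemma lamMax_smul_one_sub_posSemidef {n : ℕ} (hn : 1 ≤ n) {A : Matrix (Fin n) (Fin n) ℝ}
    (hA : A.IsHermitian) :
    (lamMax hA • (1 : Matrix (Fin n) (Fin n) ℝ) - A).PosSemidef := by
  have hU : (hA.eigenvectorUnitary : Matrix (Fin n) (Fin n) ℝ) *
      star (hA.eigenvectorUnitary : Matrix (Fin n) (Fin n) ℝ) = 1 :=
    Matrix.mem_unitaryGroup_iff.mp hA.eigenvectorUnitary.2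
  have key : lamMax hA • (1 : Matrix (Fin n) (Fin n) ℝ) - A
      = (hA.eigenvectorUnitary : Matrix (Fin n) (Fin n) ℝ) *
        Matrix.diagonal (fun i => lamMax hA - hA.eigenvalues i) *
        star (hA.eigenvectorUnitary : Matrix (Fin n) (Fin n) ℝ) := by
    have hdiag : Matrix.diagonal (fun i => lamMax hA - hA.eigenvalues i)
        = lamMax hA • (1 : Matrix (Fin n) (Fin n) ℝ)
          - Matrix.diagonal (RCLike.ofReal ∘ hA.eigenvalues) := by
      ext i j
      by_cases h : i = j <;>
        simp [Matrix.diagonal_apply, h, Matrix.smul_apply, Matrix.one_apply]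
    rw [hdiag, Matrix.mul_sub, Matrix.sub_mul, Matrix.mul_smul, Matrix.mul_one,
      Matrix.smul_mul, hU]
    conv_lhs => arg 2; rw [hA.spectral_theorem, Unitary.conjStarAlgAut_apply]
  rw [key]
  refine Matrix.PosSemidef.mul_mul_conjTranspose_same ?_ _
  refine Matrix.posSemidef_diagonal_iff.mpr fun i => ?_
  simpa using eigenvalue_le_lamMax hn hA i

lemma trace_herm_mul_le {n : ℕ} (hn : 1 ≤ n) {A S : Matrix (Fin n) (Fin n) ℝ}
    (hA : A.IsHermitian) (hS : S.PosSemidef) :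
    (A * S).trace ≤ lamMax hA * S.trace := by
  have h := psd_trace_mul_nonneg (lamMax_smul_one_sub_posSemidef hn hA) hS
  rw [Matrix.sub_mul, Matrix.smul_mul, Matrix.one_mul, Matrix.trace_sub,
    Matrix.trace_smul, smul_eq_mul, sub_nonneg] at h
  exact h

theorem stmt_8 {n : ℕ} (hn : 1 ≤ n) (J B Sg : ℝ → Matrix (Fin n) (Fin n) ℝ) (t : ℝ)
    (hpsd : (Sg t).PosSemidef)
    (hSg : HasDerivAt Sg (J t * Sg t + Sg t * (J t)ᵀ + B t) t) :
    deriv (fun s => (Sg s).trace) t ≤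
      2 * lamMax (symPart_isHermitian (J t)) * (Sg t).trace + (B t).trace := by
  have L : Matrix (Fin n) (Fin n) ℝ →L[ℝ] ℝ :=
    LinearMap.toContinuousLinearMap (Matrix.traceLinearMap (Fin n) ℝ ℝ)
  have hderiv : HasDerivAt (fun s => (Sg s).trace)
      ((J t * Sg t + Sg t * (J t)ᵀ + B t).trace) t := by
    have := (LinearMap.toContinuousLinearMap
      (Matrix.traceLinearMap (Fin n) ℝ ℝ)).hasFDerivAt.comp_hasDerivAt t hSg
    exact this
  rw [hderiv.deriv]
  have htr : (J t * Sg t + Sg t * (J t)ᵀ + B t).trace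
      = 2 * ((symPart (J t)) * Sg t).trace + (B t).trace := by
    rw [Matrix.trace_add, Matrix.trace_add]
    have : (Sg t * (J t)ᵀ).trace = ((J t)ᵀ * Sg t).trace := Matrix.trace_mul_comm _ _
    rw [this]
    have h2 : (2 : ℝ) • (symPart (J t)) = J t + (J t)ᵀ := by
      simp [symPart, smul_smul]
    rw [show (2 : ℝ) * ((symPart (J t)) * Sg t).trace
        = (((2 : ℝ) • symPart (J t)) * Sg t).trace by
      rw [Matrix.smul_mul, Matrix.trace_smul, smul_eq_mul]]
    rw [h2, Matrix.add_mul, Matrix.trace_add]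
  rw [htr]
  have hle := trace_herm_mul_le hn (symPart_isHermitian (J t)) hpsd
  nlinarith [hle]
end

section
/- (Modal decomposition, Proposition 1.) Let n ≥ 1. Let J, B, Σ : ℝ → Matrix (Fin n) (Fin n) ℂ and V, Λ : ℝ → Matrix (Fin n) (Fin n) ℂ. Suppose at time t: J(t) has real entries and J(t) = V(t) Λ(t) V(t)⁻¹ with Λ(t) diagonal and V(t) invertible in a neighbourhood of t; V is differentiable at t; and Σ is differentiable at t with Σ'(t) = J(t)Σ(t) + Σ(t)J(t)ᵀ + B(t). Define Σ_y(s) = V(s)⁻¹ Σ(s) (V(s)⁻¹)ᴴ, B_y(s) = V(s)⁻¹ B(s) (V(s)⁻¹)ᴴ and M(t) = V(t)⁻¹ V'(t), where (·)ᴴ denotes the conjugate transpose. Then Σ_y is differentiable at t with Σ_y'(t) = Λ(t)Σ_y(t) + Σ_y(t)Λ(t)ᴴ + B_y(t) − M(t)Σ_y(t) − Σ_y(t)M(t)ᴴ. -/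
open Matrix

attribute [local instance] Matrix.normedAddCommGroup Matrix.normedSpace

variable {n : ℕ}

theorem hasDerivAt_matrix {f : ℝ → Matrix (Fin n) (Fin n) ℂ}
    {f' : Matrix (Fin n) (Fin n) ℂ} {t : ℝ} :
    HasDerivAt f f' t ↔ ∀ i j, HasDerivAt (fun s => f s i j) (f' i j) t := by
  constructor
  · intro h i j
    exact hasDerivAt_pi.1 (hasDerivAt_pi.1 h i) j
  · intro h
    exact hasDerivAt_pi.2 fun i => hasDerivAt_pi.2 fun j => h i j

theorem HasDerivAt.matMul {f g : ℝ → Matrix (Fin n) (Fin n) ℂ}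
    {f' g' : Matrix (Fin n) (Fin n) ℂ} {t : ℝ}
    (hf : HasDerivAt f f' t) (hg : HasDerivAt g g' t) :
    HasDerivAt (fun s => f s * g s) (f' * g t + f t * g') t := by
  rw [hasDerivAt_matrix] at hf hg ⊢
  intro i j
  have : ∀ s, (f s * g s) i j = ∑ k, f s i k * g s k j := fun s => Matrix.mul_apply
  simp only [Matrix.add_apply, Matrix.mul_apply, ← Finset.sum_add_distrib]
  exact HasDerivAt.fun_sum fun k _ => (hf i k).mul (hg k j)

theorem HasDerivAt.matConjT {f : ℝ → Matrix (Fin n) (Fin n) ℂ}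
    {f' : Matrix (Fin n) (Fin n) ℂ} {t : ℝ} (hf : HasDerivAt f f' t) :
    HasDerivAt (fun s => (f s)ᴴ) f'ᴴ t := by
  rw [hasDerivAt_matrix] at hf ⊢
  intro i j
  simpa [Matrix.conjTranspose_apply] using (hf j i).star

theorem differentiableAt_det {f : ℝ → Matrix (Fin n) (Fin n) ℂ} {t : ℝ}
    (hf : ∀ i j, DifferentiableAt ℝ (fun s => f s i j) t) :
    DifferentiableAt ℝ (fun s => (f s).det) t := by
  simp only [Matrix.det_apply]
  refine DifferentiableAt.fun_sum fun σ _ => ?_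
  simp only [Units.smul_def, zsmul_eq_mul]
  refine DifferentiableAt.const_mul ?_ _
  exact (HasFDerivAt.finset_prod fun i _ => (hf (σ i) i).hasFDerivAt).differentiableAt

theorem differentiableAt_matInv {V : ℝ → Matrix (Fin n) (Fin n) ℂ} {t : ℝ}
    (hV : HasDerivAt V V' t) (hVt : IsUnit (V t)) :
    DifferentiableAt ℝ (fun s => (V s)⁻¹) t := by
  have hentry : ∀ i j, DifferentiableAt ℝ (fun s => V s i j) t := fun i j =>
    (hasDerivAt_matrix.1 hV i j).differentiableAt
  have hdet : DifferentiableAt ℝ (fun s => (V s).det) t := differentiableAt_det hentry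
  have hdet0 : (V t).det ≠ 0 := ((Matrix.isUnit_iff_isUnit_det _).1 hVt).ne_zero
  have : ∀ i j, DifferentiableAt ℝ (fun s => (V s)⁻¹ i j) t := by
    intro i j
    have heq : (fun s => (V s)⁻¹ i j)
        = fun s => ((V s).det)⁻¹ * (V s).adjugate i j := by
      funext s
      rw [Matrix.inv_def, Matrix.smul_apply, smul_eq_mul, Ring.inverse_eq_inv']
    rw [heq]
    refine (hdet.inv hdet0).mul ?_
    have : (fun s => (V s).adjugate i j)
        = fun s => ((V s).updateRow j (Pi.single i 1)).det := by
      funext s; rw [Matrix.adjugate_apply]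
    rw [this]
    refine differentiableAt_det fun a b => ?_
    by_cases haj : a = j
    · simp [Matrix.updateRow_apply, haj]
    · simpa [Matrix.updateRow_apply, haj] using hentry a b
  exact differentiableAt_pi.2 fun i => differentiableAt_pi.2 fun j => this i j
theorem stmt_10 {n : ℕ} (hn : 1 ≤ n)
    (J B Sg V L : ℝ → Matrix (Fin n) (Fin n) ℂ)
    (V' : Matrix (Fin n) (Fin n) ℂ) (t : ℝ)
    (hJreal : ∀ i j, (J t i j).im = 0)
    (hdecomp : J t = V t * L t * (V t)⁻¹)
    (hLdiag : (L t).IsDiag)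
    (hVinv : ∀ᶠ s in nhds t, IsUnit (V s))
    (hV : HasDerivAt V V' t)
    (hSg : HasDerivAt Sg (J t * Sg t + Sg t * (J t)ᵀ + B t) t) :
    HasDerivAt (fun s => (V s)⁻¹ * Sg s * ((V s)⁻¹)ᴴ)
      (L t * ((V t)⁻¹ * Sg t * ((V t)⁻¹)ᴴ) + ((V t)⁻¹ * Sg t * ((V t)⁻¹)ᴴ) * (L t)ᴴ
        + (V t)⁻¹ * B t * ((V t)⁻¹)ᴴ
        - ((V t)⁻¹ * V') * ((V t)⁻¹ * Sg t * ((V t)⁻¹)ᴴ)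
        - ((V t)⁻¹ * Sg t * ((V t)⁻¹)ᴴ) * ((V t)⁻¹ * V')ᴴ) t := by
  have hVt : IsUnit (V t) := hVinv.self_of_nhds
  have hVdet : IsUnit (V t).det := (Matrix.isUnit_iff_isUnit_det _).1 hVt
  have hVW : V t * (V t)⁻¹ = 1 := Matrix.mul_nonsing_inv _ hVdet
  have hWV : (V t)⁻¹ * V t = 1 := Matrix.nonsing_inv_mul _ hVdet
  have hWdiff : DifferentiableAt ℝ (fun s => (V s)⁻¹) t := differentiableAt_matInv hV hVt
  set D := deriv (fun s => (V s)⁻¹) t with hDdef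
  have hW : HasDerivAt (fun s => (V s)⁻¹) D t := hWdiff.hasDerivAt
  have hev : (fun s => V s * (V s)⁻¹) =ᶠ[nhds t] fun _ => 1 := by
    filter_upwards [hVinv] with s hs
    exact Matrix.mul_nonsing_inv _ ((Matrix.isUnit_iff_isUnit_det _).1 hs)
  have h0 : HasDerivAt (fun s => V s * (V s)⁻¹) (0 : Matrix (Fin n) (Fin n) ℂ) t :=
    (hasDerivAt_const t (1 : Matrix (Fin n) (Fin n) ℂ)).congr_of_eventuallyEq hev
  have hzero : V' * (V t)⁻¹ + V t * D = 0 := (hV.matMul hW).unique h0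
  have hDe : D = -((V t)⁻¹ * V' * (V t)⁻¹) := by
    have h1 : V t * D = -(V' * (V t)⁻¹) := by
      have := hzero
      linear_combination (norm := noncomm_ring) this
    calc D = ((V t)⁻¹ * V t) * D := by rw [hWV, Matrix.one_mul]
      _ = (V t)⁻¹ * (V t * D) := by rw [Matrix.mul_assoc]
      _ = (V t)⁻¹ * -(V' * (V t)⁻¹) := by rw [h1]
      _ = -((V t)⁻¹ * V' * (V t)⁻¹) := by noncomm_ring
  have hJT : (J t)ᵀ = (J t)ᴴ := by
    ext i j
    simp only [Matrix.transpose_apply, Matrix.conjTranspose_apply, Complex.star_def]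
    exact (Complex.conj_eq_iff_im.2 (hJreal j i)).symm
  have key := (hW.matMul hSg).matMul hW.matConjT
  convert key using 1
  rw [hDe, hJT, hdecomp]
  have hc1 : (V t)ᴴ * ((V t)⁻¹)ᴴ = 1 := by
    rw [← Matrix.conjTranspose_mul, hWV, Matrix.conjTranspose_one]
  have hc1' : ∀ X : Matrix (Fin n) (Fin n) ℂ, (V t)ᴴ * (((V t)⁻¹)ᴴ * X) = X := by
    intro X; rw [← Matrix.mul_assoc, hc1, Matrix.one_mul]
  have hc2 : ∀ X : Matrix (Fin n) (Fin n) ℂ, (V t)⁻¹ * (V t * X) = X := by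
    intro X; rw [← Matrix.mul_assoc, hWV, Matrix.one_mul]
  simp only [Matrix.conjTranspose_mul, Matrix.conjTranspose_neg, Matrix.mul_add,
    Matrix.add_mul, Matrix.neg_mul, Matrix.mul_neg, Matrix.mul_assoc, hc1, hc1', hc2,
    hWV, Matrix.mul_one, Matrix.one_mul]
  abel
end

section
/- (Symmetric eigenbasis decomposition, Proposition 2.) Let n ≥ 1 and let J, B, Σ : ℝ → Matrix (Fin n) (Fin n) ℝ, with Σ differentiable at t and Σ'(t) = J(t)Σ(t) + Σ(t)J(t)ᵀ + B(t). Write H(t) = (J(t)+J(t)ᵀ)/2 and K(t) = (J(t)−J(t)ᵀ)/2. Let S : ℝ → Matrix (Fin n) (Fin n) ℝ be differentiable at t with S(s) orthogonal (S(s)ᵀ S(s) = 1) for s near t, and Λ_H : ℝ → Matrix (Fin n) (Fin n) ℝ diagonal with H(t) = S(t) Λ_H(t) S(t)ᵀ. Define Σ_H(s) = S(s)ᵀ Σ(s) S(s), B_H = Sᵀ B S, K_H = Sᵀ K S and M_S(t) = S'(t)ᵀ S(t). Then Σ_H is differentiable at t with Σ_H'(t) = (Λ_H Σ_H + Σ_H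 Λ_H) + (K_H Σ_H − Σ_H K_H) + B_H + (M_S Σ_H − Σ_H M_S), all evaluated at t. -/
open Matrix

attribute [local instance] Matrix.normedAddCommGroup Matrix.normedSpace

section aux
variable {n : ℕ}

noncomputable def trCLM (n : ℕ) :
    Matrix (Fin n) (Fin n) ℝ →L[ℝ] Matrix (Fin n) (Fin n) ℝ :=
  LinearMap.toContinuousLinearMap (Matrix.transposeLinearEquiv (Fin n) (Fin n) ℝ ℝ).toLinearMap

noncomputable def mulCLM (n : ℕ) :
    Matrix (Fin n) (Fin n) ℝ →L[ℝ]
      Matrix (Fin n) (Fin n) ℝ →L[ℝ] Matrix (Fin n) (Fin n) ℝ :=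
  LinearMap.toContinuousLinearMap
    ((LinearMap.toContinuousLinearMap :
        (Matrix (Fin n) (Fin n) ℝ →ₗ[ℝ] Matrix (Fin n) (Fin n) ℝ) ≃ₗ[ℝ]
        (Matrix (Fin n) (Fin n) ℝ →L[ℝ] Matrix (Fin n) (Fin n) ℝ)).toLinearMap.comp
      (LinearMap.mul ℝ (Matrix (Fin n) (Fin n) ℝ)))

lemma mulCLM_apply (A X : Matrix (Fin n) (Fin n) ℝ) : mulCLM n A X = A * X := rfl

lemma hasDerivAt_tr {S : ℝ → Matrix (Fin n) (Fin n) ℝ} {S' : Matrix (Fin n) (Fin n) ℝ} {t : ℝ}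
    (h : HasDerivAt S S' t) : HasDerivAt (fun s => (S s)ᵀ) S'ᵀ t :=
  (trCLM n).hasFDerivAt.comp_hasDerivAt t h

lemma hasDerivAt_matmul {A B : ℝ → Matrix (Fin n) (Fin n) ℝ}
    {A' B' : Matrix (Fin n) (Fin n) ℝ} {t : ℝ}
    (hA : HasDerivAt A A' t) (hB : HasDerivAt B B' t) :
    HasDerivAt (fun s => A s * B s) (A' * B t + A t * B') t := by
  letI : NormedAddCommGroup (Matrix (Fin n) (Fin n) ℝ →L[ℝ] Matrix (Fin n) (Fin n) ℝ) :=
    ContinuousLinearMap.toNormedAddCommGroup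
  letI : NormedSpace ℝ (Matrix (Fin n) (Fin n) ℝ →L[ℝ] Matrix (Fin n) (Fin n) ℝ) :=
    ContinuousLinearMap.toNormedSpace
  have h1 : HasDerivAt (fun s => mulCLM n (A s)) (mulCLM n A') t :=
    (mulCLM n).hasFDerivAt.comp_hasDerivAt t hA
  exact h1.clm_apply hB

end aux

theorem stmt_13 {n : ℕ} (hn : 1 ≤ n)
    (J B Sg S LH : ℝ → Matrix (Fin n) (Fin n) ℝ)
    (S' : Matrix (Fin n) (Fin n) ℝ) (t : ℝ)
    (hSg : HasDerivAt Sg (J t * Sg t + Sg t * (J t)ᵀ + B t) t)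
    (hS : HasDerivAt S S' t)
    (horth : ∀ᶠ s in nhds t, (S s)ᵀ * S s = 1)
    (hLHdiag : (LH t).IsDiag)
    (hdecomp : (1 / 2 : ℝ) • (J t + (J t)ᵀ) = S t * LH t * (S t)ᵀ) :
    HasDerivAt (fun s => (S s)ᵀ * Sg s * S s)
      ((LH t * ((S t)ᵀ * Sg t * S t) + ((S t)ᵀ * Sg t * S t) * LH t)
        + (((S t)ᵀ * ((1 / 2 : ℝ) • (J t - (J t)ᵀ)) * S t) * ((S t)ᵀ * Sg t * S t)
            - ((S t)ᵀ * Sg t * S t) * ((S t)ᵀ * ((1 / 2 : ℝ) • (J t - (J t)ᵀ)) * S t))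
        + (S t)ᵀ * B t * S t
        + ((S'ᵀ * S t) * ((S t)ᵀ * Sg t * S t)
            - ((S t)ᵀ * Sg t * S t) * (S'ᵀ * S t))) t := by
  set P := S t with hP
  have hTr : HasDerivAt (fun s => (S s)ᵀ) S'ᵀ t := hasDerivAt_tr hS
  have hD := hasDerivAt_matmul (hasDerivAt_matmul hTr hSg) hS
  have h1 : Pᵀ * P = 1 := horth.self_of_nhds
  have h2 : P * Pᵀ = 1 := mul_eq_one_comm.mp h1
  -- derivative of SᵀS = 1 gives Pᵀ S' = -(S'ᵀ P)
  have hc : HasDerivAt (fun s => (S s)ᵀ * S s) 0 t :=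
    (hasDerivAt_const t (1 : Matrix (Fin n) (Fin n) ℝ)).congr_of_eventuallyEq horth
  have hzero : S'ᵀ * P + Pᵀ * S' = 0 := (hasDerivAt_matmul hTr hS).unique hc
  have h3 : Pᵀ * S' = -(S'ᵀ * P) := eq_neg_of_add_eq_zero_right hzero
  have hH : Pᵀ * ((1 / 2 : ℝ) • (J t + (J t)ᵀ)) * P = LH t := by
    rw [hdecomp]
    have : Pᵀ * (P * LH t * Pᵀ) * P = (Pᵀ * P) * LH t * (Pᵀ * P) := by noncomm_ring
    rw [this, h1, one_mul, mul_one]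
  have hJsplit : J t = (1 / 2 : ℝ) • (J t + (J t)ᵀ) + (1 / 2 : ℝ) • (J t - (J t)ᵀ) := by
    module
  have hJTsplit : (J t)ᵀ = (1 / 2 : ℝ) • (J t + (J t)ᵀ) - (1 / 2 : ℝ) • (J t - (J t)ᵀ) := by
    module
  set K := Pᵀ * ((1 / 2 : ℝ) • (J t - (J t)ᵀ)) * P with hK
  have hJ : Pᵀ * J t * P = LH t + K := by
    conv_lhs => rw [hJsplit]
    rw [show Pᵀ * ((1 / 2 : ℝ) • (J t + (J t)ᵀ) + (1 / 2 : ℝ) • (J t - (J t)ᵀ)) * P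
        = Pᵀ * ((1 / 2 : ℝ) • (J t + (J t)ᵀ)) * P + Pᵀ * ((1 / 2 : ℝ) • (J t - (J t)ᵀ)) * P
        from by noncomm_ring, hH]
  have hJT : Pᵀ * (J t)ᵀ * P = LH t - K := by
    conv_lhs => rw [hJTsplit]
    rw [show Pᵀ * ((1 / 2 : ℝ) • (J t + (J t)ᵀ) - (1 / 2 : ℝ) • (J t - (J t)ᵀ)) * P
        = Pᵀ * ((1 / 2 : ℝ) • (J t + (J t)ᵀ)) * P - Pᵀ * ((1 / 2 : ℝ) • (J t - (J t)ᵀ)) * P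
        from by noncomm_ring, hH]
  set Sh := Pᵀ * Sg t * P with hShd
  set M := S'ᵀ * P with hM
  convert hD using 1
  -- rewrite each piece of the true derivative
  have eA : S'ᵀ * Sg t = M * (Pᵀ * Sg t) := by
    rw [hM, mul_assoc, ← mul_assoc P, h2, one_mul]
  have eC : Pᵀ * Sg t * S' = Sh * (Pᵀ * S') := by
    conv_rhs => rw [hShd]
    rw [show Pᵀ * Sg t * P * (Pᵀ * S') = Pᵀ * Sg t * (P * Pᵀ) * S' from by noncomm_ring,
      h2, mul_one]
  have eJ : Pᵀ * (J t * Sg t) * P = (LH t + K) * Sh := by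
    rw [← hJ, hShd]
    rw [show Pᵀ * (J t * Sg t) * P = Pᵀ * J t * (P * Pᵀ) * Sg t * P from by
      rw [h2]; noncomm_ring]
    noncomm_ring
  have eJT : Pᵀ * (Sg t * (J t)ᵀ) * P = Sh * (LH t - K) := by
    rw [← hJT, hShd]
    rw [show Pᵀ * (Sg t * (J t)ᵀ) * P = Pᵀ * Sg t * (P * Pᵀ) * (J t)ᵀ * P from by
      rw [h2]; noncomm_ring]
    noncomm_ring
  calc LH t * Sh + Sh * LH t + (K * Sh - Sh * K) + Pᵀ * B t * P + (M * Sh - Sh * M)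
      = ((LH t + K) * Sh + Sh * (LH t - K) + Pᵀ * B t * P) + M * Sh + Sh * -M := by noncomm_ring
    _ = (S'ᵀ * Sg t + Pᵀ * (J t * Sg t + Sg t * (J t)ᵀ + B t)) * P + Pᵀ * Sg t * S' := by
        rw [← eJ, ← eJT, eC, h3]
        rw [show (Pᵀ * (J t * Sg t) * P + Pᵀ * (Sg t * (J t)ᵀ) * P + Pᵀ * B t * P)
            = Pᵀ * (J t * Sg t + Sg t * (J t)ᵀ + B t) * P from by noncomm_ring]
        rw [show M * Sh = M * (Pᵀ * Sg t) * P from by rw [hShd]; noncomm_ring, ← eA]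
        noncomm_ring
end

section
/- (Symmetric eigenbasis decomposition, scalar form, Proposition 2.) Under the hypotheses of the symmetric eigenbasis decomposition — Σ'(t) = J(t)Σ(t) + Σ(t)J(t)ᵀ + B(t), H = (J+Jᵀ)/2 = S Λ_H Sᵀ with S(s) orthogonal and differentiable near t and Λ_H(t) = diag(μ₁(t),…,μₙ(t)), K = (J−Jᵀ)/2, Σ_H = Sᵀ Σ S, B_H = Sᵀ B S, K_H = Sᵀ K S, M_S = (S')ᵀ S — and assuming additionally that Σ(t) is symmetric, each diagonal element σ_i(s) = (Σ_H(s))_{ii} is differentiable at t with σ_i'(t) = 2·μ_i(t)·σ_i(t) + (B_H(t))_{ii} + 2·∑_k ((K_H(t))_{ik} + (M_S(t))_{ik})·(Σ_H(t))_{ki}. -/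
open Matrix

attribute [local instance] Matrix.normedAddCommGroup Matrix.normedSpace

private lemma entryD {n : ℕ} {f : ℝ → Matrix (Fin n) (Fin n) ℝ}
    {f' : Matrix (Fin n) (Fin n) ℝ} {t : ℝ} (hf : HasDerivAt f f' t) (i j : Fin n) :
    HasDerivAt (fun s => f s i j) (f' i j) t :=
  hasDerivAt_pi.1 (hasDerivAt_pi.1 hf i) j

private lemma mulD {n : ℕ} {f g : ℝ → Matrix (Fin n) (Fin n) ℝ}
    {f' g' : Matrix (Fin n) (Fin n) ℝ} {t : ℝ}
    (hf : HasDerivAt f f' t) (hg : HasDerivAt g g' t) :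
    HasDerivAt (fun s => f s * g s) (f' * g t + f t * g') t := by
  apply hasDerivAt_pi.2; intro i; apply hasDerivAt_pi.2; intro j
  simp only [Matrix.mul_apply, Matrix.add_apply]
  rw [← Finset.sum_add_distrib]
  exact HasDerivAt.fun_sum fun k _ => (entryD hf i k).mul (entryD hg k j)

private lemma transD {n : ℕ} {f : ℝ → Matrix (Fin n) (Fin n) ℝ}
    {f' : Matrix (Fin n) (Fin n) ℝ} {t : ℝ} (hf : HasDerivAt f f' t) :
    HasDerivAt (fun s => (f s)ᵀ) f'ᵀ t := by
  apply hasDerivAt_pi.2; intro i; apply hasDerivAt_pi.2; intro j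
  exact entryD hf j i

theorem stmt_14 {n : ℕ} (hn : 1 ≤ n)
    (J B Sg S LH : ℝ → Matrix (Fin n) (Fin n) ℝ)
    (S' : Matrix (Fin n) (Fin n) ℝ) (t : ℝ)
    (hSg : HasDerivAt Sg (J t * Sg t + Sg t * (J t)ᵀ + B t) t)
    (hS : HasDerivAt S S' t)
    (horth : ∀ᶠ s in nhds t, (S s)ᵀ * S s = 1)
    (hLHdiag : (LH t).IsDiag)
    (hdecomp : (1 / 2 : ℝ) • (J t + (J t)ᵀ) = S t * LH t * (S t)ᵀ)
    (hSgsym : (Sg t)ᵀ = Sg t)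
    (i : Fin n) :
    HasDerivAt (fun s => ((S s)ᵀ * Sg s * S s) i i)
      (2 * LH t i i * ((S t)ᵀ * Sg t * S t) i i
        + ((S t)ᵀ * B t * S t) i i
        + 2 * ∑ k, (((S t)ᵀ * ((1 / 2 : ℝ) • (J t - (J t)ᵀ)) * S t) i k + (S'ᵀ * S t) i k)
            * ((S t)ᵀ * Sg t * S t) k i) t := by
  have hSS : (S t)ᵀ * S t = 1 := horth.self_of_nhds
  have hSSt : S t * (S t)ᵀ = 1 := mul_eq_one_comm.mp hSS
  have hG : HasDerivAt (fun s => (S s)ᵀ * S s) (S'ᵀ * S t + (S t)ᵀ * S') t := mulD (transD hS) hS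
  have hG0 : HasDerivAt (fun s => (S s)ᵀ * S s) 0 t :=
    (hasDerivAt_const t (1 : Matrix (Fin n) (Fin n) ℝ)).congr_of_eventuallyEq horth
  have hskew : S'ᵀ * S t + (S t)ᵀ * S' = 0 := hG.unique hG0
  have hPS' : (S t)ᵀ * S' = -(S'ᵀ * S t) := eq_neg_of_add_eq_zero_right hskew
  have hmain : HasDerivAt (fun s => (S s)ᵀ * Sg s * S s)
      ((S'ᵀ * Sg t + (S t)ᵀ * (J t * Sg t + Sg t * (J t)ᵀ + B t)) * S t
        + ((S t)ᵀ * Sg t) * S') t := mulD (mulD (transD hS) hSg) hS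
  -- abbreviations (as plain defs via set later); first key matrix identities
  have hJ : (1 / 2 : ℝ) • (J t + (J t)ᵀ) + (1 / 2 : ℝ) • (J t - (J t)ᵀ) = J t := by module
  have hH : (S t)ᵀ * J t * S t
      = LH t + (S t)ᵀ * ((1 / 2 : ℝ) • (J t - (J t)ᵀ)) * S t := by
    calc (S t)ᵀ * J t * S t
        = (S t)ᵀ * ((1 / 2 : ℝ) • (J t + (J t)ᵀ) + (1 / 2 : ℝ) • (J t - (J t)ᵀ)) * S t := by
          rw [hJ]
      _ = (S t)ᵀ * ((1 / 2 : ℝ) • (J t + (J t)ᵀ)) * S t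
          + (S t)ᵀ * ((1 / 2 : ℝ) • (J t - (J t)ᵀ)) * S t := by
          rw [Matrix.mul_add, Matrix.add_mul]
      _ = LH t + (S t)ᵀ * ((1 / 2 : ℝ) • (J t - (J t)ᵀ)) * S t := by
          rw [hdecomp,
            show (S t)ᵀ * (S t * LH t * (S t)ᵀ) * S t
              = ((S t)ᵀ * S t) * LH t * ((S t)ᵀ * S t) from by noncomm_ring,
            hSS, Matrix.one_mul, Matrix.mul_one]
  have hLsym : (LH t)ᵀ = LH t := by
    ext a b
    by_cases h : a = b
    · subst h; rfl
    · rw [Matrix.transpose_apply, hLHdiag h, hLHdiag (Ne.symm h)]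
  have hKneg : ((1 / 2 : ℝ) • (J t - (J t)ᵀ))ᵀ = -((1 / 2 : ℝ) • (J t - (J t)ᵀ)) := by
    rw [Matrix.transpose_smul, Matrix.transpose_sub, Matrix.transpose_transpose]; module
  have hKskewM : ((S t)ᵀ * ((1 / 2 : ℝ) • (J t - (J t)ᵀ)) * S t)ᵀ
      = -((S t)ᵀ * ((1 / 2 : ℝ) • (J t - (J t)ᵀ)) * S t) := by
    rw [Matrix.transpose_mul, Matrix.transpose_mul, Matrix.transpose_transpose, hKneg]
    noncomm_ring
  have hJT : (S t)ᵀ * (J t)ᵀ * S t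
      = LH t - (S t)ᵀ * ((1 / 2 : ℝ) • (J t - (J t)ᵀ)) * S t := by
    have := congrArg Matrix.transpose hH
    rw [Matrix.transpose_add, hLsym, hKskewM, Matrix.transpose_mul, Matrix.transpose_mul,
      Matrix.transpose_transpose] at this
    rw [show (S t)ᵀ * (J t)ᵀ * S t = (S t)ᵀ * ((J t)ᵀ * S t) from by noncomm_ring, this]
    abel
  have hSigsymM : ((S t)ᵀ * Sg t * S t)ᵀ = (S t)ᵀ * Sg t * S t := by
    rw [Matrix.transpose_mul, Matrix.transpose_mul, Matrix.transpose_transpose, hSgsym]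
    noncomm_ring
  have hMskewM : (S'ᵀ * S t)ᵀ = -(S'ᵀ * S t) := by
    rw [Matrix.transpose_mul, Matrix.transpose_transpose, hPS']
  -- the four pieces
  have e1 : (S'ᵀ * S t) * ((S t)ᵀ * Sg t * S t) = S'ᵀ * Sg t * S t := by
    rw [show S'ᵀ * S t * ((S t)ᵀ * Sg t * S t) = S'ᵀ * (S t * (S t)ᵀ) * Sg t * S t from by
      noncomm_ring, hSSt, Matrix.mul_one]
  have e2 : (LH t + (S t)ᵀ * ((1 / 2 : ℝ) • (J t - (J t)ᵀ)) * S t) * ((S t)ᵀ * Sg t * S t)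
      = (S t)ᵀ * (J t * Sg t) * S t := by
    rw [← hH, show ((S t)ᵀ * J t * S t) * ((S t)ᵀ * Sg t * S t)
      = (S t)ᵀ * J t * (S t * (S t)ᵀ) * Sg t * S t from by noncomm_ring, hSSt, Matrix.mul_one]
    noncomm_ring
  have e3 : ((S t)ᵀ * Sg t * S t) * (LH t - (S t)ᵀ * ((1 / 2 : ℝ) • (J t - (J t)ᵀ)) * S t)
      = (S t)ᵀ * (Sg t * (J t)ᵀ) * S t := by
    rw [← hJT, show ((S t)ᵀ * Sg t * S t) * ((S t)ᵀ * (J t)ᵀ * S t)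
      = (S t)ᵀ * Sg t * (S t * (S t)ᵀ) * (J t)ᵀ * S t from by noncomm_ring, hSSt, Matrix.mul_one]
    noncomm_ring
  have e4 : ((S t)ᵀ * Sg t * S t) * (-(S'ᵀ * S t)) = (S t)ᵀ * Sg t * S' := by
    rw [← hPS', show ((S t)ᵀ * Sg t * S t) * ((S t)ᵀ * S')
      = (S t)ᵀ * Sg t * (S t * (S t)ᵀ) * S' from by noncomm_ring, hSSt, Matrix.mul_one]
  have hDmat : (S'ᵀ * Sg t + (S t)ᵀ * (J t * Sg t + Sg t * (J t)ᵀ + B t)) * S t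
        + ((S t)ᵀ * Sg t) * S'
      = (S'ᵀ * S t) * ((S t)ᵀ * Sg t * S t)
        + ((LH t + (S t)ᵀ * ((1 / 2 : ℝ) • (J t - (J t)ᵀ)) * S t) * ((S t)ᵀ * Sg t * S t)
          + ((S t)ᵀ * Sg t * S t) * (LH t - (S t)ᵀ * ((1 / 2 : ℝ) • (J t - (J t)ᵀ)) * S t)
          + (S t)ᵀ * B t * S t
          + ((S t)ᵀ * Sg t * S t) * (-(S'ᵀ * S t))) := by
    rw [e1, e2, e3, e4]; noncomm_ring
  have hmain' := entryD hmain i i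
  rw [hDmat] at hmain'
  -- now entrywise facts
  set K := (S t)ᵀ * ((1 / 2 : ℝ) • (J t - (J t)ᵀ)) * S t with hKdef
  set M := S'ᵀ * S t with hMdef
  set SH := (S t)ᵀ * Sg t * S t with hSigdef
  set L := LH t with hLdef
  set BH := (S t)ᵀ * B t * S t with hBdef
  have hSigsym : ∀ a b, SH a b = SH b a := fun a b => by
    simpa using congrFun (congrFun hSigsymM b) a
  have hKskew : ∀ a b, K b a = -K a b := fun a b => by
    simpa using congrFun (congrFun hKskewM a) b
  have hMskew : ∀ a b, M b a = -M a b := fun a b => by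
    simpa using congrFun (congrFun hMskewM a) b
  have key : (M * SH + ((L + K) * SH + SH * (L - K) + BH + SH * (-M))) i i
      = 2 * L i i * SH i i + BH i i + 2 * ∑ k, (K i k + M i k) * SH k i := by
    simp only [Matrix.add_apply, Matrix.mul_apply, Matrix.sub_apply, Matrix.neg_apply]
    have hL1 : ∑ k, (L i k + K i k) * SH k i = L i i * SH i i + ∑ k, K i k * SH k i := by
      simp only [add_mul]
      rw [Finset.sum_add_distrib]
      congr 1
      exact Finset.sum_eq_single i (fun b _ hb => by rw [hLHdiag (Ne.symm hb), zero_mul])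
        (fun h => absurd (Finset.mem_univ i) h)
    have hL2 : ∑ k, SH i k * (L k i - K k i) = L i i * SH i i + ∑ k, K i k * SH k i := by
      have hterm : ∀ k, SH i k * (L k i - K k i) = L k i * SH k i + K i k * SH k i := by
        intro k
        rw [hSigsym i k, hKskew i k]
        ring
      rw [Finset.sum_congr rfl (fun k _ => hterm k), Finset.sum_add_distrib]
      congr 1
      exact Finset.sum_eq_single i (fun b _ hb => by rw [hLHdiag hb, zero_mul])
        (fun h => absurd (Finset.mem_univ i) h)
    have hL3 : ∑ k, SH i k * -M k i = ∑ k, M i k * SH k i :=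
      Finset.sum_congr rfl fun k _ => by rw [hMskew i k, hSigsym i k]; ring
    rw [hL1, hL2, hL3, show ∑ k, (K i k + M i k) * SH k i
      = (∑ k, K i k * SH k i) + ∑ k, M i k * SH k i from by
        simp only [add_mul]; rw [Finset.sum_add_distrib]]
    ring
  exact key ▸ hmain'
end

section
/- (Variance evolution in the modal basis.) Let n ≥ 1. Let Λ, M, B_y, Σ_y : ℝ → Matrix (Fin n) (Fin n) ℂ and g : ℝ → (Fin n → ℂ). Suppose at time t: Σ_y is differentiable with Σ_y'(t) = Λ(t)Σ_y(t) + Σ_y(t)Λ(t)ᴴ + B_y(t) − M(t)Σ_y(t) − Σ_y(t)M(t)ᴴ, and g is differentiable with g'(t) = M(t)ᴴ *ᵥ g(t). Then the scalar function s ↦ (star (g(s))) ⬝ᵥ (Σ_y(s) *ᵥ g(s)) is differentiable at t with derivative (star (g(t))) ⬝ᵥ ((Λ(t)Σ_y(t) + Σ_y(t)Λ(t)ᴴ + B_y(t)) *ᵥ g(t)); i.e. the rotational/eigenbasis-evolution terms involving M cancel exactly in the evolution of the quadratic form gᴴ Σ_y g. -/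
open Matrix

attribute [local instance] Matrix.normedAddCommGroup Matrix.normedSpace

theorem stmt_16 {n : ℕ} (hn : 1 ≤ n)
    (L M By Sy : ℝ → Matrix (Fin n) (Fin n) ℂ)
    (g : ℝ → Fin n → ℂ) (t : ℝ)
    (hSy : HasDerivAt Sy
      (L t * Sy t + Sy t * (L t)ᴴ + By t - M t * Sy t - Sy t * (M t)ᴴ) t)
    (hg : HasDerivAt g ((M t)ᴴ *ᵥ g t) t) :
    HasDerivAt (fun s => star (g s) ⬝ᵥ (Sy s *ᵥ g s))
      (star (g t) ⬝ᵥ ((L t * Sy t + Sy t * (L t)ᴴ + By t) *ᵥ g t)) t := by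
  set S' : Matrix (Fin n) (Fin n) ℂ :=
    L t * Sy t + Sy t * (L t)ᴴ + By t - M t * Sy t - Sy t * (M t)ᴴ with hS'
  set d : Fin n → ℂ := (M t)ᴴ *ᵥ g t with hd
  have hgi : ∀ i, HasDerivAt (fun s => g s i) (d i) t := fun i =>
    (hasDerivAt_pi.mp hg i)
  have hSij : ∀ i j, HasDerivAt (fun s => Sy s i j) (S' i j) t := fun i j =>
    hasDerivAt_pi.mp (hasDerivAt_pi.mp hSy i) j
  have hconj : ∀ i, HasDerivAt (fun s => (starRingEnd ℂ) (g s i))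
      ((starRingEnd ℂ) (d i)) t := fun i =>
    (Complex.conjCLE.hasFDerivAt.comp_hasDerivAt t (hgi i))
  have hinner : ∀ i, HasDerivAt (fun s => ∑ j, Sy s i j * g s j)
      (∑ j, (S' i j * g t j + Sy t i j * d j)) t := fun i =>
    HasDerivAt.fun_sum fun j _ => (hSij i j).mul (hgi j)
  have hmain : HasDerivAt (fun s => star (g s) ⬝ᵥ (Sy s *ᵥ g s))
      (∑ i, ((starRingEnd ℂ) (d i) * (∑ j, Sy t i j * g t j)
        + (starRingEnd ℂ) (g t i) * (∑ j, (S' i j * g t j + Sy t i j * d j)))) t := by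
    have : (fun s => star (g s) ⬝ᵥ (Sy s *ᵥ g s))
        = fun s => ∑ i, (starRingEnd ℂ) (g s i) * (∑ j, Sy s i j * g s j) := by
      funext s
      simp [dotProduct, mulVec, Pi.star_apply]
    rw [this]
    exact HasDerivAt.fun_sum fun i _ => (hconj i).mul (hinner i)
  convert hmain using 1
  have key : (∑ i, ((starRingEnd ℂ) (d i) * (∑ j, Sy t i j * g t j)
        + (starRingEnd ℂ) (g t i) * (∑ j, (S' i j * g t j + Sy t i j * d j))))
      = star d ⬝ᵥ (Sy t *ᵥ g t) + star (g t) ⬝ᵥ (S' *ᵥ g t)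
        + star (g t) ⬝ᵥ (Sy t *ᵥ d) := by
    simp [dotProduct, mulVec, Pi.star_apply, mul_add, Finset.sum_add_distrib,
      Finset.mul_sum, add_assoc]
  rw [key]
  have h1 : star d ⬝ᵥ (Sy t *ᵥ g t) = star (g t) ⬝ᵥ ((M t * Sy t) *ᵥ g t) := by
    rw [hd, star_mulVec, conjTranspose_conjTranspose, ← dotProduct_mulVec,
      mulVec_mulVec]
  have h2 : star (g t) ⬝ᵥ (Sy t *ᵥ d) = star (g t) ⬝ᵥ ((Sy t * (M t)ᴴ) *ᵥ g t) := by
    rw [hd, mulVec_mulVec]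
  rw [h1, h2, hS']
  simp only [sub_mulVec, add_mulVec, dotProduct_sub, dotProduct_add]
  ring
end
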